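/- Let c be a configuration of the broadcast network with Set(c) = {s_1, …, s_m} (the s_i pairwise distinct). If c →+ c, then there is a cycle ({s_1}, …, {s_m}) →_G^+ ({s_1}, …, {s_m}) in the graph G; in fact, a computation c → c_1 → … → c_ℓ → c induces the path whose j-th vertex is (Target_c(s_1, c_j), …, Target_c(s_m, c_j)), where Target_c(s, d) = {d[i] : c[i] = s}. -/

import Mathlib

/-- Communication operations over a message domain `D`: send `!a` or receive `?a`. -/
inductive Op (D : Type) where
  | send : D → Op D
  | recv : D → Op D
  deriving DecidableEq

/-- One transition `c →_a c'` of the broadcast network with sender `i` and receivers `R`: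
the sender takes a send transition on `a`, every receiver takes a receive transition on `a`,
and all other clients stay idle. -/
def StepAt {D Q : Type} (δ : Set (Q × Op D × Q)) (a : D) {k : ℕ}
    (c c' : Fin k → Q) (i : Fin k) (R : Set (Fin k)) : Prop :=
  i ∉ R ∧ (c i, Op.send a, c' i) ∈ δ ∧
    (∀ j ∈ R, (c j, Op.recv a, c' j) ∈ δ) ∧
    (∀ j, j ∉ R → j ≠ i → c' j = c j)

/-- A transition `c → c'` of the broadcast network (for some message, sender and receivers). -/
def Step {D Q : Type} (δ : Set (Q × Op D × Q)) {k : ℕ} (c c' : Fin k → Q) : Prop :=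
  ∃ (a : D) (i : Fin k) (R : Set (Fin k)), StepAt δ a c c' i R

/-- `post_{?a}(S)`: successors of `S` under receive transitions on `a`. -/
def postRecv {D Q : Type} (δ : Set (Q × Op D × Q)) (a : D) (S : Set Q) : Set Q :=
  {r' | ∃ r ∈ S, (r, Op.recv a, r') ∈ δ}

/-- `enabled_{?a}(S)`: states of `S` where a receive of `a` is enabled. -/
def enabledRecv {D Q : Type} (δ : Set (Q × Op D × Q)) (a : D) (S : Set Q) : Set Q :=
  {r | r ∈ S ∧ (postRecv δ a {r}).Nonempty}

/-- The edge relation `V →_G V'` of the graph `G` on tuples of subsets of `Q`. -/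
def GEdge {D Q : Type} (δ : Set (Q × Op D × Q)) {m : ℕ} (V V' : Fin m → Set Q) : Prop :=
  ∃ (a : D) (j : Fin m) (s s' : Q), s ∈ V j ∧ s' ∈ V' j ∧ (s, Op.send a, s') ∈ δ ∧
    ∃ Gen Kill : Fin m → Set Q,
      (∀ i, Gen i ⊆ postRecv δ a (V i)) ∧
      (∀ i, Kill i ⊆ enabledRecv δ a (V i)) ∧
      (∀ i, i ≠ j → V' i = (V i \ Kill i) ∪ Gen i) ∧
      (∃ U : Set Q, (U = V j ∨ U = V j \ {s}) ∧ V' j = ((U \ Kill j) ∪ Gen j) ∪ {s'}) ∧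
      (∀ i, ∀ q ∈ Kill i, (postRecv δ a {q} ∩ Gen i).Nonempty)

/-- Key lemma: a single step between configurations induces a `G`-edge between the
corresponding tuples of target sets. -/
lemma step_to_gedge {D Q : Type} (δ : Set (Q × Op D × Q))
    {m k : ℕ} (s : Fin m → Q) (hs : Function.Injective s)
    (c : Fin k → Q) (hrange : Set.range c = Set.range s)
    (d d' : Fin k → Q) (hstep : Step δ d d') :
    GEdge δ (fun i => {q | ∃ t, c t = s i ∧ d t = q})
            (fun i => {q | ∃ t, c t = s i ∧ d' t = q}) := by
  obtain ⟨a, i, R, hiR, hsend, hrecv, hidle⟩ := hstep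
  obtain ⟨j, hj⟩ : ∃ j, s j = c i := by
    have : c i ∈ Set.range s := hrange ▸ Set.mem_range_self i
    exact this
  set Gen : Fin m → Set Q := fun i' => {q | ∃ t, t ∈ R ∧ c t = s i' ∧ d' t = q} with hGen
  set Kill : Fin m → Set Q := fun i' =>
    {q | (∃ t, c t = s i' ∧ d t = q) ∧ (¬ ∃ t, c t = s i' ∧ d' t = q) ∧
        ∃ t, t ∈ R ∧ c t = s i' ∧ d t = q} with hKill
  refine ⟨a, j, d i, d' i, ⟨i, hj.symm, rfl⟩, ⟨i, hj.symm, rfl⟩, hsend,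
    Gen, Kill, ?_, ?_, ?_, ?_, ?_⟩
  · rintro i' q ⟨t, htR, hct, rfl⟩
    exact ⟨d t, ⟨t, hct, rfl⟩, hrecv t htR⟩
  · rintro i' q ⟨hV, hV', t, htR, hct, rfl⟩
    exact ⟨hV, d' t, d t, rfl, hrecv t htR⟩
  · intro i' hij
    ext q
    simp only [Set.mem_setOf_eq, Set.mem_union, Set.mem_diff]
    constructor
    · rintro ⟨t, hct, rfl⟩
      have hti : t ≠ i := by
        rintro rfl
        exact hij (hs (hct.symm.trans hj.symm))
      by_cases htR : t ∈ R
      · exact Or.inr ⟨t, htR, hct, rfl⟩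
      · refine Or.inl ⟨⟨t, hct, (hidle t htR hti).symm⟩, fun h => h.2.1 ⟨t, hct, rfl⟩⟩
    · rintro (⟨⟨t, hct, rfl⟩, hK⟩ | ⟨t, htR, hct, rfl⟩)
      · have hti : t ≠ i := by
          rintro rfl
          exact hij (hs (hct.symm.trans hj.symm))
        by_cases hq : ∃ t', c t' = s i' ∧ d' t' = d t
        · exact hq
        · by_cases htR : t ∈ R
          · exact absurd ⟨⟨t, hct, rfl⟩, hq, t, htR, hct, rfl⟩ hK
          · exact ⟨t, hct, hidle t htR hti⟩
      · exact ⟨t, hct, rfl⟩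
  · -- sender component
    by_cases hdi : ∃ t', c t' = s j ∧ d' t' = d i
    · -- U = V j
      refine ⟨{q | ∃ t, c t = s j ∧ d t = q}, Or.inl rfl, ?_⟩
      ext q
      simp only [Set.mem_setOf_eq, Set.mem_union, Set.mem_diff, Set.mem_singleton_iff]
      constructor
      · rintro ⟨t, hct, rfl⟩
        by_cases hti : t = i
        · subst hti; exact Or.inr rfl
        · by_cases htR : t ∈ R
          · exact Or.inl (Or.inr ⟨t, htR, hct, rfl⟩)
          · exact Or.inl (Or.inl ⟨⟨t, hct, (hidle t htR hti).symm⟩,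
              fun h => h.2.1 ⟨t, hct, rfl⟩⟩)
      · rintro ((⟨⟨t, hct, rfl⟩, hK⟩ | ⟨t, htR, hct, rfl⟩) | rfl)
        · by_cases hq : ∃ t', c t' = s j ∧ d' t' = d t
          · exact hq
          · by_cases hti : t = i
            · subst hti; exact absurd hdi hq
            · by_cases htR : t ∈ R
              · exact absurd ⟨⟨t, hct, rfl⟩, hq, t, htR, hct, rfl⟩ hK
              · exact ⟨t, hct, hidle t htR hti⟩
        · exact ⟨t, hct, rfl⟩
        · exact ⟨i, hj.symm, rfl⟩
    · -- U = V j \ {d i}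
      refine ⟨{q | ∃ t, c t = s j ∧ d t = q} \ {d i}, Or.inr rfl, ?_⟩
      ext q
      simp only [Set.mem_setOf_eq, Set.mem_union, Set.mem_diff, Set.mem_singleton_iff]
      constructor
      · rintro ⟨t, hct, rfl⟩
        by_cases hti : t = i
        · subst hti; exact Or.inr rfl
        · by_cases htR : t ∈ R
          · exact Or.inl (Or.inr ⟨t, htR, hct, rfl⟩)
          · refine Or.inl (Or.inl ⟨⟨⟨t, hct, (hidle t htR hti).symm⟩, ?_⟩,
              fun h => h.2.1 ⟨t, hct, rfl⟩⟩)
            intro heq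
            exact hdi ⟨t, hct, heq⟩
      · rintro ((⟨⟨⟨t, hct, rfl⟩, hne⟩, hK⟩ | ⟨t, htR, hct, rfl⟩) | rfl)
        · have hti : t ≠ i := fun h => hne (h ▸ rfl)
          by_cases hq : ∃ t', c t' = s j ∧ d' t' = d t
          · exact hq
          · by_cases htR : t ∈ R
            · exact absurd ⟨⟨t, hct, rfl⟩, hq, t, htR, hct, rfl⟩ hK
            · exact ⟨t, hct, hidle t htR hti⟩
        · exact ⟨t, hct, rfl⟩
        · exact ⟨i, hj.symm, rfl⟩
  · rintro i' q ⟨hV, hV', t, htR, hct, rfl⟩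
    exact ⟨d' t, ⟨d t, rfl, hrecv t htR⟩, t, htR, hct, rfl⟩

/-- If `c` is a configuration with `Set(c) = {s 0, …, s (m-1)}` (the `s i` pairwise distinct)
and `c →⁺ c`, then there is a cycle `({s 0}, …, {s (m-1)}) →_G⁺ ({s 0}, …, {s (m-1)})` in `G`;
in fact, any computation `c → c_1 → … → c_ℓ → c` induces the path whose `j`-th vertex is
`(Target_c(s 0, c_j), …, Target_c(s (m-1), c_j))`, where `Target_c(s, d) = {d[t] : c[t] = s}`. -/
theorem config_cycle_to_graph_cycle {D Q : Type} [Fintype Q] (δ : Set (Q × Op D × Q))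
    {m k : ℕ} (s : Fin m → Q) (hs : Function.Injective s)
    (c : Fin k → Q) (hrange : Set.range c = Set.range s)
    (hcyc : Relation.TransGen (Step δ) c c) :
    Relation.TransGen (GEdge δ) (fun i => ({s i} : Set Q)) (fun i => {s i}) ∧
    ∀ (ℓ : ℕ) (cs : ℕ → Fin k → Q), cs 0 = c → cs (ℓ + 1) = c →
      (∀ j ≤ ℓ, Step δ (cs j) (cs (j + 1))) →
      ∀ j ≤ ℓ,
        GEdge δ (fun i => {q | ∃ t, c t = s i ∧ cs j t = q})
                (fun i => {q | ∃ t, c t = s i ∧ cs (j + 1) t = q}) := by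
  constructor
  · have heq : (fun i => {q | ∃ t, c t = s i ∧ c t = q}) = fun i => ({s i} : Set Q) := by
      funext i
      ext q
      simp only [Set.mem_setOf_eq, Set.mem_singleton_iff]
      constructor
      · rintro ⟨t, hct, rfl⟩; exact hct
      · rintro rfl
        have h1 : s i ∈ Set.range c := hrange ▸ Set.mem_range_self i
        obtain ⟨t, ht⟩ := h1
        exact ⟨t, ht, ht⟩
    have hlift : Relation.TransGen (GEdge δ)
        ((fun (d : Fin k → Q) => fun i => {q | ∃ t, c t = s i ∧ d t = q}) c)
        ((fun (d : Fin k → Q) => fun i => {q | ∃ t, c t = s i ∧ d t = q}) c) :=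
      Relation.TransGen.lift
      (fun (d : Fin k → Q) => fun i => {q | ∃ t, c t = s i ∧ d t = q})
      (fun d d' h => step_to_gedge δ s hs c hrange d d' h) c c hcyc
    rw [show ((fun (d : Fin k → Q) => fun i => {q | ∃ t, c t = s i ∧ d t = q}) c)
        = fun i => ({s i} : Set Q) from heq] at hlift
    exact hlift
  · intro ℓ cs _ _ hsteps j hj
    exact step_to_gedge δ s hs c hrange (cs j) (cs (j + 1)) (hsteps j hj)
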